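/- Let S ≠ T be k-subsets of [n] and let h(S,T) be the multigraph whose edges are f(S) ∪ f(T) (with multiplicity). Then every cycle in h(S,T) has exactly 2 vertices; that is, h(S,T) contains no cycle on 3 or more vertices, so every connected component of h(S,T) is an isolated vertex, a path, or a doubled edge. -/

import Mathlib

def matchF (k : ℕ) (S : Finset ℕ) : Finset (ℕ × ℕ) :=
  (((S \ Finset.Icc 1 k).sort (· ≤ ·)).reverse.zip
    ((Finset.Icc 1 k \ S).sort (· ≤ ·))).toFinset

/-- The underlying simple graph of the multigraph `h(S,T)`, whose edges are the
pairs of `f(S) ∪ f(T)`. -/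
def hGraph (k : ℕ) (S T : Finset ℕ) : SimpleGraph ℕ where
  Adj u v := u ≠ v ∧
    ((u, v) ∈ matchF k S ∪ matchF k T ∨ (v, u) ∈ matchF k S ∪ matchF k T)
  symm := ⟨by rintro u v ⟨h1, h2⟩; exact ⟨h1.symm, h2.elim Or.inr Or.inl⟩⟩
  loopless := ⟨by rintro u ⟨h1, _⟩; exact h1 rfl⟩


lemma zip_mem_getElem {α β : Type*} {l : List α} {m : List β} {a : α} {b : β}
    (h : (a, b) ∈ l.zip m) :
    ∃ i, ∃ (h1 : i < l.length) (h2 : i < m.length), l[i] = a ∧ m[i] = b := by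
  obtain ⟨i, hi, he⟩ := List.mem_iff_getElem.1 h
  have hl : i < l.length := lt_of_lt_of_le hi (by rw [List.length_zip]; exact min_le_left _ _)
  have hm : i < m.length := lt_of_lt_of_le hi (by rw [List.length_zip]; exact min_le_right _ _)
  refine ⟨i, hl, hm, ?_, ?_⟩
  · have := List.getElem_zip (l := l) (l' := m) (i := i) (h := hi)
    rw [this] at he
    exact (Prod.mk.injEq _ _ _ _ ▸ he).1
  · have := List.getElem_zip (l := l) (l' := m) (i := i) (h := hi)
    rw [this] at he
    exact (Prod.mk.injEq _ _ _ _ ▸ he).2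

/-- index characterization of `matchF` membership -/
lemma matchF_mem_idx {k x y : ℕ} {S : Finset ℕ} (h : (x, y) ∈ matchF k S) :
    ∃ i, ∃ (h1 : i < ((S \ Finset.Icc 1 k).sort (· ≤ ·)).reverse.length)
      (h2 : i < ((Finset.Icc 1 k \ S).sort (· ≤ ·)).length),
      ((S \ Finset.Icc 1 k).sort (· ≤ ·)).reverse[i] = x ∧
      ((Finset.Icc 1 k \ S).sort (· ≤ ·))[i] = y := by
  unfold matchF at h
  rw [List.mem_toFinset] at h
  exact zip_mem_getElem h

lemma matchF_mem {k x y : ℕ} {S : Finset ℕ} (h : (x, y) ∈ matchF k S) :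
    x ∈ S ∧ x ∉ Finset.Icc 1 k ∧ y ∈ Finset.Icc 1 k ∧ y ∉ S := by
  obtain ⟨i, h1, h2, hx, hy⟩ := matchF_mem_idx h
  have hxm : x ∈ S \ Finset.Icc 1 k := by
    rw [← hx]
    have := List.getElem_mem h1
    rw [List.mem_reverse, Finset.mem_sort] at this
    exact this
  have hym : y ∈ Finset.Icc 1 k \ S := by
    rw [← hy]
    have := List.getElem_mem h2
    rw [Finset.mem_sort] at this
    exact this
  rw [Finset.mem_sdiff] at hxm hym
  exact ⟨hxm.1, hxm.2, hym.1, hym.2⟩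

/-- strictly decreasing indexing of the reversed sort -/
lemma reverse_sort_anti {s : Finset ℕ} {i j : ℕ} (hij : i < j)
    (hj : j < (s.sort (· ≤ ·)).reverse.length) :
    (s.sort (· ≤ ·)).reverse[j] < (s.sort (· ≤ ·)).reverse[i]'(hij.trans hj) := by
  have hlen : (s.sort (· ≤ ·)).reverse.length = (s.sort (· ≤ ·)).length :=
    List.length_reverse
  have hj' : j < (s.sort (· ≤ ·)).length := hlen ▸ hj
  have hi' : i < (s.sort (· ≤ ·)).length := hlen ▸ (hij.trans hj)
  rw [List.getElem_reverse, List.getElem_reverse]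
  have hs := (Finset.sortedLT_sort s).pairwise
  rw [List.pairwise_iff_getElem] at hs
  exact hs _ _ (by omega) (by omega) (by omega)

lemma sort_mono {s : Finset ℕ} {i j : ℕ} (hij : i < j)
    (hj : j < (s.sort (· ≤ ·)).length) :
    (s.sort (· ≤ ·))[i]'(hij.trans hj) < (s.sort (· ≤ ·))[j] := by
  have hs := (Finset.sortedLT_sort s).pairwise
  rw [List.pairwise_iff_getElem] at hs
  exact hs _ _ _ _ hij

lemma matchF_lt_iff {k x y x' y' : ℕ} {S : Finset ℕ} (h : (x, y) ∈ matchF k S)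
    (h' : (x', y') ∈ matchF k S) : x < x' ↔ y' < y := by
  obtain ⟨i, hi1, hi2, hix, hiy⟩ := matchF_mem_idx h
  obtain ⟨j, hj1, hj2, hjx, hjy⟩ := matchF_mem_idx h'
  rcases lt_trichotomy i j with hij | hij | hij
  · have hx := reverse_sort_anti hij hj1
    have hy := sort_mono hij hj2
    rw [hix, hjx] at hx
    rw [hiy, hjy] at hy
    constructor <;> intro hh <;> omega
  · subst hij
    rw [hix] at hjx; rw [hiy] at hjy
    omega
  · have hx := reverse_sort_anti hij hi1
    have hy := sort_mono hij hi2
    rw [hix, hjx] at hx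
    rw [hiy, hjy] at hy
    constructor <;> intro hh <;> omega

lemma matchF_right_unique {k x y y' : ℕ} {S : Finset ℕ} (h : (x, y) ∈ matchF k S)
    (h' : (x, y') ∈ matchF k S) : y = y' := by
  have h1 := matchF_lt_iff h h'
  have h2 := matchF_lt_iff h' h
  omega

lemma matchF_left_unique {k x x' y : ℕ} {S : Finset ℕ} (h : (x, y) ∈ matchF k S)
    (h' : (x', y) ∈ matchF k S) : x = x' := by
  have h1 := matchF_lt_iff h h'
  have h2 := matchF_lt_iff h' h
  omega

lemma exists_chain {R : ℕ → Prop} {Q : ℕ → ℕ → Prop}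
    (hstep : ∀ y, R y → ∃ y', R y' ∧ Q y y') {y0 : ℕ} (h0 : R y0) :
    ∃ f : ℕ → ℕ, (∀ i, R (f i)) ∧ ∀ i, Q (f i) (f (i + 1)) := by
  choose g hg1 hg2 using hstep
  let F : {y // R y} → {y // R y} := fun p => ⟨g p.1 p.2, hg1 p.1 p.2⟩
  refine ⟨fun i => (F^[i] ⟨y0, h0⟩).1, fun i => (F^[i] ⟨y0, h0⟩).2, fun i => ?_⟩
  have hit : F^[i + 1] ⟨y0, h0⟩ = F (F^[i] ⟨y0, h0⟩) := Function.iterate_succ_apply' F i _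
  simp only []
  show Q (F^[i] ⟨y0, h0⟩).1 (F^[i+1] ⟨y0, h0⟩).1
  rw [hit]
  exact hg2 _ _

lemma cycle_neighbors {G : SimpleGraph ℕ} {v : ℕ} {c : G.Walk v v} (hc : c.IsCycle)
    {u : ℕ} (hu : u ∈ c.support) :
    ∃ a b, a ≠ b ∧ G.Adj u a ∧ G.Adj u b ∧ a ∈ c.support ∧ b ∈ c.support := by
  have hc' := hc.rotate hu
  have hsub : ∀ z, z ∈ (c.rotate u hu).support → z ∈ c.support := by
    intro z hz
    rw [(c.rotate u hu).support_eq_cons, List.mem_cons] at hz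
    rcases hz with rfl | hz
    · exact hu
    · have ht := SimpleGraph.Walk.support_rotate c u hu
      have : z ∈ c.support.tail := ht.mem_iff.mp hz
      rw [c.support_eq_cons, List.mem_cons]
      exact Or.inr this
  set c' := c.rotate u hu with hcdef
  clear_value c'
  cases c' with
  | nil => exact absurd hc' SimpleGraph.Walk.IsCycle.not_of_nil
  | cons h p =>
    rename_i w
    have hlen : 3 ≤ p.length + 1 := by
      have := hc'.three_le_length
      simpa using this
    have hp : p.IsPath := ((SimpleGraph.Walk.cons_isCycle_iff p h).mp hc').1
    have hrev : p.reverse.IsPath := hp.reverse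
    obtain ⟨b, hadj, q, hq⟩ :=
      SimpleGraph.Walk.exists_eq_cons_of_ne (G.ne_of_adj h) p.reverse
    have hbw : b ≠ w := by
      rintro rfl
      have hqpath : q.IsPath := by
        have := hq ▸ hrev
        exact (SimpleGraph.Walk.cons_isPath_iff _ _).mp this |>.1
      have hqnil : q = SimpleGraph.Walk.nil := (SimpleGraph.Walk.isPath_iff_eq_nil (p := q)).mp hqpath
      have : p.reverse.length = 1 := by rw [hq, hqnil]; simp
      rw [SimpleGraph.Walk.length_reverse] at this
      omega
    refine ⟨w, b, fun hwb => hbw hwb.symm, h, hadj, ?_, ?_⟩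
    · apply hsub
      simp
    · apply hsub
      have hbp : b ∈ p.support := by
        have : b ∈ p.reverse.support := by
          rw [hq]
          simp
        rwa [SimpleGraph.Walk.support_reverse, List.mem_reverse] at this
      simp [hbp]
/-- `h(S,T)` contains no cycle on 3 or more vertices: the only possible cycles of the
multigraph are doubled edges, i.e. its underlying simple graph is acyclic. -/
theorem hGraph_no_long_cycle (n k : ℕ) (hk : k ≤ n) (S T : Finset ℕ)
    (hSsub : S ⊆ Finset.Icc 1 n) (hTsub : T ⊆ Finset.Icc 1 n)
    (hScard : S.card = k) (hTcard : T.card = k) (hST : S ≠ T) :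
    (hGraph k S T).IsAcyclic := by
  intro v c hc
  -- adjacency directed at a bottom vertex
  have neighbor_of_bottom : ∀ u a : ℕ, u ∈ Finset.Icc 1 k → (hGraph k S T).Adj u a →
      (a, u) ∈ matchF k S ∪ matchF k T := by
    intro u a hu hadj
    rcases hadj.2 with h' | h'
    · exfalso
      rcases Finset.mem_union.1 h' with h'' | h'' <;> exact (matchF_mem h'').2.1 hu
    · exact h'
  have neighbor_of_top : ∀ u a : ℕ, u ∉ Finset.Icc 1 k → (hGraph k S T).Adj u a →
      (u, a) ∈ matchF k S ∪ matchF k T := by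
    intro u a hu hadj
    rcases hadj.2 with h' | h'
    · exact h'
    · exfalso
      rcases Finset.mem_union.1 h' with h'' | h'' <;> exact hu (matchF_mem h'').2.2.1
  -- every bottom cycle vertex is matched in both S and T, with partners on the cycle
  have bottom_struct : ∀ y, y ∈ c.support → y ∈ Finset.Icc 1 k →
      ∃ x1 x2, (x1, y) ∈ matchF k S ∧ (x2, y) ∈ matchF k T ∧
        x1 ∈ c.support ∧ x2 ∈ c.support := by
    intro y hy hyI
    obtain ⟨a, b, hab, ha, hb, has, hbs⟩ := cycle_neighbors hc hy
    have ha' := neighbor_of_bottom y a hyI ha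
    have hb' := neighbor_of_bottom y b hyI hb
    rcases Finset.mem_union.1 ha' with haS | haT <;>
      rcases Finset.mem_union.1 hb' with hbS | hbT
    · exact absurd (matchF_left_unique haS hbS) hab
    · exact ⟨a, b, haS, hbT, has, hbs⟩
    · exact ⟨b, a, hbS, haT, hbs, has⟩
    · exact absurd (matchF_left_unique haT hbT) hab
  -- every top cycle vertex has two distinct partners on the cycle
  have top_struct : ∀ x, x ∈ c.support → x ∉ Finset.Icc 1 k →
      ∃ y1 y2, (x, y1) ∈ matchF k S ∧ (x, y2) ∈ matchF k T ∧
        y1 ∈ c.support ∧ y2 ∈ c.support ∧ y1 ≠ y2 := by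
    intro x hx hxI
    obtain ⟨a, b, hab, ha, hb, has, hbs⟩ := cycle_neighbors hc hx
    have ha' := neighbor_of_top x a hxI ha
    have hb' := neighbor_of_top x b hxI hb
    rcases Finset.mem_union.1 ha' with haS | haT <;>
      rcases Finset.mem_union.1 hb' with hbS | hbT
    · exact absurd (matchF_right_unique haS hbS) hab
    · exact ⟨a, b, haS, hbT, has, hbs, hab⟩
    · exact ⟨b, a, hbS, haT, hbs, has, fun h => hab h.symm⟩
    · exact absurd (matchF_right_unique haT hbT) hab
  -- the shift relation
  let Q : ℕ → ℕ → Prop :=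
    fun y y' => y ≠ y' ∧ ∃ x, (x, y) ∈ matchF k S ∧ (x, y') ∈ matchF k T
  let R : ℕ → Prop :=
    fun y => y ∈ c.support ∧ y ∈ Finset.Icc 1 k ∧ ∃ x, (x, y) ∈ matchF k S
  have step : ∀ y, R y → ∃ y', R y' ∧ Q y y' := by
    rintro y ⟨hy, hyI, x, hxy⟩
    obtain ⟨x1, x2, hx1, hx2, hx1s, hx2s⟩ := bottom_struct y hy hyI
    have hxx1 : x = x1 := matchF_left_unique hxy hx1
    subst hxx1
    have hxI : x ∉ Finset.Icc 1 k := (matchF_mem hx1).2.1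
    obtain ⟨y1, y2, hy1, hy2, hy1s, hy2s, hne⟩ := top_struct x hx1s hxI
    have hy1y : y1 = y := matchF_right_unique hy1 hx1
    subst hy1y
    have hy2I : y2 ∈ Finset.Icc 1 k := (matchF_mem hy2).2.2.1
    obtain ⟨x1', _, hx1', _, _, _⟩ := bottom_struct y2 hy2s hy2I
    exact ⟨y2, ⟨hy2s, hy2I, x1', hx1'⟩, hne, x, hx1, hy2⟩
  -- a starting bottom vertex
  have start : ∃ y0, R y0 := by
    obtain ⟨a, b, hab, ha, hb, has, hbs⟩ := cycle_neighbors hc c.start_mem_support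
    rcases ha.2 with h' | h'
    · -- (v, a) is an edge: a is a bottom vertex
      have haI : a ∈ Finset.Icc 1 k := by
        rcases Finset.mem_union.1 h' with h'' | h'' <;> exact (matchF_mem h'').2.2.1
      obtain ⟨x1, _, hx1, _, _, _⟩ := bottom_struct a has haI
      exact ⟨a, has, haI, x1, hx1⟩
    · -- (a, v) is an edge: v is a bottom vertex
      have hvI : v ∈ Finset.Icc 1 k := by
        rcases Finset.mem_union.1 h' with h'' | h'' <;> exact (matchF_mem h'').2.2.1
      obtain ⟨x1, _, hx1, _, _, _⟩ := bottom_struct v c.start_mem_support hvI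
      exact ⟨v, c.start_mem_support, hvI, x1, hx1⟩
  -- Q is strictly order preserving
  have mono : ∀ a b a' b', Q a b → Q a' b' → a < a' → b < b' := by
    rintro a b a' b' ⟨-, x, hxa, hxb⟩ ⟨-, x', hxa', hxb'⟩ hlt
    have h1 : x' < x := (matchF_lt_iff hxa' hxa).2 hlt
    exact (matchF_lt_iff hxb' hxb).1 h1
  obtain ⟨y0, h0⟩ := start
  obtain ⟨f, hfR, hfQ⟩ := exists_chain step h0
  have hbd : ∀ i, f i ≤ k := fun i => (Finset.mem_Icc.1 (hfR i).2.1).2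
  rcases lt_or_gt_of_ne (hfQ 0).1 with hlt | hgt
  · have hstep : ∀ i, f i < f (i + 1) := by
      intro i
      induction i with
      | zero => exact hlt
      | succ m ih => exact mono _ _ _ _ (hfQ m) (hfQ (m + 1)) ih
    have hgrow : ∀ i, f 0 + i ≤ f i := by
      intro i
      induction i with
      | zero => omega
      | succ m ih => have := hstep m; omega
    have := hgrow (k + 1)
    have := hbd (k + 1)
    omega
  · have hstep : ∀ i, f (i + 1) < f i := by
      intro i
      induction i with
      | zero => exact hgt
      | succ m ih => exact mono _ _ _ _ (hfQ (m + 1)) (hfQ m) ih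
    have hgrow : ∀ i, f i + i ≤ f 0 := by
      intro i
      induction i with
      | zero => omega
      | succ m ih => have := hstep m; omega
    have := hgrow (f 0 + 1)
    omega
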